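/- Let U and V be topological spaces, K : U → 2^V an upper semicontinuous set-valued map with nonempty compact values, and f : U × V → ℝ an upper semicontinuous function that is feasible path transfer lower semicontinuous in u with respect to K. Then the maximizing map M(u) = {v ∈ K(u) : f(u,v) ≥ f(u,w) for all w ∈ K(u)} is upper semicontinuous with nonempty compact values. -/

import Mathlib

open Filter Topology Set

/-- An upper semicontinuous real function attains its maximum on a nonempty compact set. -/
lemma usc_exists_max {V : Type*} [TopologicalSpace V] {s : Set V} (hs : IsCompact s)
    (hne : s.Nonempty) {g : V → ℝ} (hg : UpperSemicontinuous g) :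
    ∃ v ∈ s, ∀ w ∈ s, g w ≤ g v := by
  by_contra h
  push_neg at h
  -- cover s by open sets {x | g x < g v}
  have hcov : s ⊆ ⋃ v : s, {x | g x < g (v : V)} := by
    intro w hw
    obtain ⟨v, hv, hgv⟩ := h w hw
    exact mem_iUnion.2 ⟨⟨v, hv⟩, hgv⟩
  obtain ⟨t, ht⟩ := hs.elim_finite_subcover (fun v : s => {x | g x < g (v : V)})
    (fun v => hg.isOpen_preimage _) hcov
  have htne : t.Nonempty := by
    obtain ⟨w, hw⟩ := hne
    obtain ⟨v, hv, -⟩ := mem_iUnion₂.1 (ht hw)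
    exact ⟨v, hv⟩
  obtain ⟨v₀, hv₀t, hv₀max⟩ := t.exists_max_image (fun v : s => g (v : V)) htne
  obtain ⟨v₁, hv₁t, hlt⟩ := mem_iUnion₂.1 (ht v₀.2)
  exact absurd (hv₀max v₁ hv₁t) (not_le.2 hlt)

theorem stmt4 {U V : Type*} [TopologicalSpace U] [TopologicalSpace V]
    (K : U → Set V)
    (hKusc : ∀ u : U, ∀ W : Set V, IsOpen W → K u ⊆ W → ∀ᶠ u' in 𝓝 u, K u' ⊆ W)
    (hKne : ∀ u, (K u).Nonempty) (hKcpt : ∀ u, IsCompact (K u))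
    (f : U → V → ℝ)
    (hfusc : UpperSemicontinuous (fun p : U × V => f p.1 p.2))
    (hFPT : ∀ u : U, ∀ v ∈ K u, ∀ ε : ℝ, 0 < ε →
      ∀ᶠ u' in 𝓝 u, ∃ v' ∈ K u', f u v < f u' v' + ε) :
    (∀ u : U, ∀ W : Set V, IsOpen W →
      {v ∈ K u | ∀ w ∈ K u, f u w ≤ f u v} ⊆ W →
      ∀ᶠ u' in 𝓝 u, {v ∈ K u' | ∀ w ∈ K u', f u' w ≤ f u' v} ⊆ W) ∧
    ∀ u : U, ({v ∈ K u | ∀ w ∈ K u, f u w ≤ f u v}).Nonempty ∧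
      IsCompact {v ∈ K u | ∀ w ∈ K u, f u w ≤ f u v} := by
  -- the slices f u · are upper semicontinuous
  have hslice : ∀ u : U, UpperSemicontinuous (f u) := by
    intro u
    have : Continuous (fun v : V => (u, v)) := Continuous.prodMk_right u
    exact hfusc.comp this
  -- existence of maximizers
  have hMne : ∀ u : U, ({v ∈ K u | ∀ w ∈ K u, f u w ≤ f u v}).Nonempty := by
    intro u
    obtain ⟨v, hv, hmax⟩ := usc_exists_max (hKcpt u) (hKne u) (hslice u)
    exact ⟨v, hv, hmax⟩
  constructor
  · -- upper semicontinuity of the maximizing map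
    intro u W hW hMW
    obtain ⟨vstar, hvK, hvmax⟩ := hMne u
    set m := f u vstar with hm
    by_cases hC : (K u \ W).Nonempty
    · -- compact set of non-maximizers outside W
      have hCcpt : IsCompact (K u \ W) := (hKcpt u).inter_right hW.isClosed_compl
      obtain ⟨c₀, hc₀, hc₀max⟩ := usc_exists_max hCcpt hC (hslice u)
      set m' := f u c₀ with hm'
      have hm'lt : m' < m := by
        rcases lt_or_eq_of_le (hvmax c₀ hc₀.1) with h | h
        · exact h
        · exact absurd (hMW ⟨hc₀.1, fun w hw => h ▸ hvmax w hw⟩) hc₀.2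
      set ε := (m - m') / 3 with hε
      have hεpos : 0 < ε := by rw [hε]; linarith
      -- tube lemma around {u} × (K u \ W)
      have hNopen : IsOpen {p : U × V | f p.1 p.2 < m' + ε} :=
        hfusc.isOpen_preimage (m' + ε)
      have hsub : {u} ×ˢ (K u \ W) ⊆ {p : U × V | f p.1 p.2 < m' + ε} := by
        rintro ⟨u', c⟩ ⟨rfl, hc⟩
        exact lt_of_le_of_lt (hc₀max c hc) (lt_add_of_pos_right _ hεpos)
      obtain ⟨A, B, hAopen, hBopen, hA, hB, hAB⟩ :=
        generalized_tube_lemma isCompact_singleton hCcpt hNopen hsub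
      have huA : u ∈ A := hA rfl
      -- the three eventually statements
      have h1 : ∀ᶠ u' in 𝓝 u, ∃ v' ∈ K u', f u vstar < f u' v' + ε :=
        hFPT u vstar hvK ε hεpos
      have h2 : ∀ᶠ u' in 𝓝 u, u' ∈ A := hAopen.mem_nhds huA
      have h3 : ∀ᶠ u' in 𝓝 u, K u' ⊆ W ∪ B := by
        apply hKusc u (W ∪ B) (hW.union hBopen)
        intro v hv
        by_cases hvW : v ∈ W
        · exact Or.inl hvW
        · exact Or.inr (hB ⟨hv, hvW⟩)
      filter_upwards [h1, h2, h3] with u' ⟨v', hv'K, hv'⟩ hu'A hKu'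
      rintro v ⟨hvKu', hvmax'⟩
      rcases hKu' hvKu' with hvW | hvB
      · exact hvW
      · exfalso
        have hlow : m - ε < f u' v :=
          lt_of_lt_of_le (by linarith [hv']) (hvmax' v' hv'K)
        have hhigh : f u' v < m' + ε := hAB (Set.mk_mem_prod hu'A hvB)
        have : m' + ε = m - 2 * ε := by rw [hε]; ring
        linarith
    · -- K u ⊆ W: direct from u.s.c. of K
      rw [not_nonempty_iff_eq_empty, diff_eq_empty] at hC
      filter_upwards [hKusc u W hW hC] with u' hu' v hv
      exact hu' hv.1
  · -- nonempty compact values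
    intro u
    refine ⟨hMne u, ?_⟩
    have : {v ∈ K u | ∀ w ∈ K u, f u w ≤ f u v}
        = K u ∩ ⋂ w ∈ K u, {v | f u w ≤ f u v} := by
      ext v
      simp [mem_iInter, and_comm]
    rw [this]
    exact (hKcpt u).inter_right
      (isClosed_biInter fun w _ => by
        have h := ((hslice u).isOpen_preimage (f u w)).isClosed_compl
        convert h using 1
        ext v
        simp [not_lt])
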